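/- (Proposition D, Cozzi–Farina–Valdinoci criterion.) Let n ≥ 2 and let H : ℝⁿ → ℝ be continuous, continuously differentiable on ℝⁿ \ {0}, with H(ξ) > 0 for all ξ ≠ 0 and H(tξ) = |t| H(ξ) for all t ∈ ℝ and ξ ∈ ℝⁿ. Assume the set K = {ξ ∈ ℝⁿ : H(ξ) < 1} is strictly convex, and let H*(x) = sup_{ξ ∈ K} ⟨x, ξ⟩ be its support function, assumed continuously differentiable on ℝⁿ \ {0}. Then the following are equivalent: (i) ⟨H(x)∇H(x), H*(y)∇H*(y)⟩ = ⟨x, y⟩ for all x, y ∈ ℝⁿ \ {0}; (ii) there exists a real symmetric positive definite n×n matrix M such that H(ξ) = √⟨Mξ, ξ⟩ for all ξ ∈ ℝⁿ. -/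

import Mathlib

open scoped RealInnerProductSpace

namespace Stmt17Aux

variable {F : Type*} [NormedAddCommGroup F] [InnerProductSpace ℝ F] [CompleteSpace F]

lemma inner_gradient_eq (f : F → ℝ) (x : F) (v : F) :
    ⟪gradient f x, v⟫ = fderiv ℝ f x v := by
  rw [gradient, ← InnerProductSpace.toDual_apply_apply,
    (InnerProductSpace.toDual ℝ _).apply_symm_apply]

lemma hasGradientAt_of_diff {f : F → ℝ} {x : F} (hf : DifferentiableAt ℝ f x) :
    HasGradientAt f (gradient f x) x := by
  rw [hasGradientAt_iff_hasFDerivAt, gradient,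
    (InnerProductSpace.toDual ℝ _).apply_symm_apply]
  exact hf.hasFDerivAt

section H
variable {H : F → ℝ} (hHcont : Continuous H)
  (hHpos : ∀ ξ : F, ξ ≠ 0 → 0 < H ξ)
  (hHhom : ∀ (t : ℝ) (ξ : F), H (t • ξ) = |t| * H ξ)

include hHhom in
lemma H_zero : H 0 = 0 := by
  have := hHhom 0 0
  simpa using this

include hHhom hHpos in
lemma H_nonneg (x : F) : 0 ≤ H x := by
  rcases eq_or_ne x 0 with rfl | hx
  · rw [H_zero hHhom]
  · exact (hHpos x hx).le

include hHcont hHpos hHhom in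
lemma H_lower [Nontrivial F] [ProperSpace F] : ∃ m : ℝ, 0 < m ∧ ∀ x : F, m * ‖x‖ ≤ H x := by
  have hsph : (Metric.sphere (0:F) 1).Nonempty :=
    NormedSpace.sphere_nonempty.2 (by norm_num)
  obtain ⟨z, hz, hmin⟩ := (isCompact_sphere (0:F) 1).exists_isMinOn hsph hHcont.continuousOn
  have hz0 : z ≠ 0 := by
    intro h; rw [mem_sphere_zero_iff_norm, h, norm_zero] at hz; norm_num at hz
  refine ⟨H z, hHpos z hz0, fun x => ?_⟩
  rcases eq_or_ne x 0 with rfl | hx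
  · simp [H_zero hHhom]
  · have hnx : (0:ℝ) < ‖x‖ := norm_pos_iff.2 hx
    have hu : (‖x‖⁻¹ • x) ∈ Metric.sphere (0:F) 1 := by
      simp [mem_sphere_zero_iff_norm, norm_smul, abs_of_pos (inv_pos.2 hnx),
        inv_mul_cancel₀ hnx.ne']
    have hle := hmin hu
    have hx2 : H x = ‖x‖ * H (‖x‖⁻¹ • x) := by
      conv_lhs => rw [show x = ‖x‖ • (‖x‖⁻¹ • x) by
        rw [smul_smul, mul_inv_cancel₀ hnx.ne', one_smul]]
      rw [hHhom, abs_of_pos hnx]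
    rw [hx2, mul_comm (H z) ‖x‖]
    exact mul_le_mul_of_nonneg_left hle hnx.le

include hHcont hHpos hHhom in
lemma closure_K : closure {ξ : F | H ξ < 1} = {ξ : F | H ξ ≤ 1} := by
  apply subset_antisymm
  · exact closure_minimal (fun ξ (h : H ξ < 1) => h.le)
      (isClosed_le hHcont continuous_const)
  · intro z (hz : H z ≤ 1)
    have htd : Filter.Tendsto (fun k : ℕ => (1 - (k+1:ℝ)⁻¹) • z) Filter.atTop (nhds z) := by
      have h1 : Filter.Tendsto (fun k : ℕ => (1 - (k+1:ℝ)⁻¹)) Filter.atTop (nhds 1) := by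
        have h0 := tendsto_one_div_add_atTop_nhds_zero_nat (𝕜 := ℝ)
        simpa [one_div] using (tendsto_const_nhds (x := (1:ℝ))).sub h0
      simpa using h1.smul_const z
    refine mem_closure_of_tendsto htd (Filter.Eventually.of_forall fun k => ?_)
    show H _ < 1
    rw [hHhom]
    have hk1 : (0:ℝ) < (k+1:ℝ)⁻¹ := by positivity
    have hk2 : (k+1:ℝ)⁻¹ ≤ 1 := by
      rw [inv_le_one_iff₀]; right
      have : (0:ℝ) ≤ k := Nat.cast_nonneg k
      linarith
    have habs : |1 - (k+1:ℝ)⁻¹| = 1 - (k+1:ℝ)⁻¹ := abs_of_nonneg (by linarith)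
    rw [habs]
    have hH0 : 0 ≤ H z := H_nonneg hHpos hHhom z
    nlinarith

include hHpos hHhom in
lemma H_triangle (hKconv : Convex ℝ {ξ : F | H ξ ≤ 1}) (a b : F) :
    H (a + b) ≤ H a + H b := by
  rcases eq_or_ne a 0 with rfl | ha
  · simp [H_zero hHhom]
  rcases eq_or_ne b 0 with rfl | hb
  · simp [H_zero hHhom]
  have hαpos := hHpos a ha
  have hβpos := hHpos b hb
  have h1 : H ((H a)⁻¹ • a) ≤ 1 := by
    rw [hHhom, abs_of_pos (inv_pos.2 hαpos), inv_mul_cancel₀ hαpos.ne']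
  have h2 : H ((H b)⁻¹ • b) ≤ 1 := by
    rw [hHhom, abs_of_pos (inv_pos.2 hβpos), inv_mul_cancel₀ hβpos.ne']
  have hc := hKconv h1 h2 (a := H a/(H a + H b)) (b := H b/(H a + H b))
    (by positivity) (by positivity) (by field_simp)
  set c := (H a/(H a + H b)) • ((H a)⁻¹ • a) + (H b/(H a + H b)) • ((H b)⁻¹ • b) with hcdef
  have hceq : c = (H a + H b)⁻¹ • (a + b) := by
    rw [hcdef, smul_smul, smul_smul, smul_add]
    congr 2 <;> · field_simp
  have hcle : H c ≤ 1 := hc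
  have heq : H (a + b) = (H a + H b) * H c := by
    rw [hceq, hHhom, abs_of_pos (by positivity), ← mul_assoc,
      mul_inv_cancel₀ (by positivity), one_mul]
  rw [heq]
  nlinarith

include hHhom in
lemma euler {x : F} (hdiff : DifferentiableAt ℝ H x) :
    ⟪gradient H x, x⟫ = H x := by
  have hc : HasDerivAt (fun t : ℝ => t • x) ((1:ℝ) • x) 1 :=
    (hasDerivAt_id (1:ℝ)).smul_const x
  have hfd : HasFDerivAt H (fderiv ℝ H x) ((fun t : ℝ => t • x) 1) := by
    simpa using hdiff.hasFDerivAt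
  have h1 : HasDerivAt (fun t : ℝ => H (t • x)) (fderiv ℝ H x ((1:ℝ) • x)) 1 :=
    hfd.comp_hasDerivAt 1 hc
  have h2 : HasDerivAt (fun t : ℝ => H (t • x)) (H x) 1 := by
    have hid : HasDerivAt (fun t : ℝ => t * H x) (H x) 1 := by
      simpa using (hasDerivAt_id (1:ℝ)).mul_const (H x)
    refine hid.congr_of_eventuallyEq ?_
    filter_upwards [Ioi_mem_nhds (zero_lt_one)] with t (ht : 0 < t)
    rw [hHhom, abs_of_pos ht]
  have := h1.unique h2
  rw [inner_gradient_eq]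
  simpa using this

include hHpos hHhom in
lemma gradient_le (htri : ∀ a b : F, H (a + b) ≤ H a + H b)
    {x : F} (hdiff : DifferentiableAt ℝ H x) (ξ : F) :
    ⟪gradient H x, ξ⟫ ≤ H ξ := by
  set d : ℝ := fderiv ℝ H x ξ with hd
  have hgd : ⟪gradient H x, ξ⟫ = d := inner_gradient_eq H x ξ
  rw [hgd]
  have hc : HasDerivAt (fun t : ℝ => x + t • ξ) ((1:ℝ) • ξ) 0 := by
    exact ((hasDerivAt_id (0:ℝ)).smul_const ξ).const_add x
  have hfd : HasFDerivAt H (fderiv ℝ H x) ((fun t : ℝ => x + t • ξ) 0) := by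
    simpa using hdiff.hasFDerivAt
  have h1 : HasDerivAt (fun t : ℝ => H (x + t • ξ)) d 0 := by
    have := hfd.comp_hasDerivAt 0 hc; simp only [one_smul] at this; exact this
  have hslope := hasDerivAt_iff_tendsto_slope.1 h1
  have hslope' : Filter.Tendsto (slope (fun t : ℝ => H (x + t • ξ)) 0) (nhdsWithin 0 (Set.Ioi 0))
      (nhds d) :=
    hslope.mono_left (nhdsWithin_mono 0 (fun t (ht : 0 < t) => ne_of_gt ht))
  refine le_of_tendsto hslope' ?_
  filter_upwards [self_mem_nhdsWithin] with t (ht : 0 < t)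
  have hb : H (x + t • ξ) ≤ H x + t * H ξ := by
    have := htri x (t • ξ)
    rwa [hHhom, abs_of_pos ht] at this
  rw [slope_def_field]
  simp only [sub_zero, zero_smul, add_zero]
  rw [div_le_iff₀ ht]
  linarith


section Hs
variable {Hs : F → ℝ}
  (hHs : Hs = fun x => sSup ((fun ξ : F => ⟪x, ξ⟫) '' {ξ : F | H ξ < 1}))
  {m : ℝ} (hm : 0 < m) (hml : ∀ x : F, m * ‖x‖ ≤ H x)

include hHhom in
lemma K_nonempty : ((fun ξ : F => ⟪y, ξ⟫) '' {ξ : F | H ξ < 1}).Nonempty :=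
  ⟨⟪y, (0:F)⟫, Set.mem_image_of_mem _ (by simp [Set.mem_setOf_eq, H_zero hHhom])⟩

include hm hml in
lemma K_bdd (y : F) : BddAbove ((fun ξ : F => ⟪y, ξ⟫) '' {ξ : F | H ξ < 1}) := by
  refine ⟨‖y‖ * m⁻¹, fun z hz => ?_⟩
  obtain ⟨ξ, hξ, rfl⟩ := hz
  have h1 : ⟪y, ξ⟫ ≤ ‖y‖ * ‖ξ‖ := real_inner_le_norm y ξ
  have h3 : m * ‖ξ‖ < 1 := lt_of_le_of_lt (hml ξ) hξ
  have h2 : ‖ξ‖ ≤ m⁻¹ := by nlinarith [mul_inv_cancel₀ hm.ne', norm_nonneg ξ]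
  exact h1.trans (mul_le_mul_of_nonneg_left h2 (norm_nonneg y))

include hHhom hHs hm hml in
lemma Hs_ge {y ξ : F} (hξ : H ξ ≤ 1) (hH0 : 0 ≤ H ξ) : ⟪y, ξ⟫ ≤ Hs y := by
  have key : ∀ t : ℝ, 0 < t → t < 1 → t * ⟪y, ξ⟫ ≤ Hs y := by
    intro t ht0 ht1
    have hmem : H (t • ξ) < 1 := by
      rw [hHhom, abs_of_pos ht0]
      nlinarith
    have : ⟪y, t • ξ⟫ ≤ Hs y := by
      rw [hHs]
      exact le_csSup (K_bdd hm hml y) (Set.mem_image_of_mem _ hmem)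
    rwa [real_inner_smul_right] at this
  have htd : Filter.Tendsto (fun t : ℝ => t * ⟪y, ξ⟫) (nhdsWithin 1 (Set.Iio 1))
      (nhds ⟪y, ξ⟫) := by
    have := ((continuous_id.mul (continuous_const (y := ⟪y, ξ⟫))).tendsto 1).mono_left
      (nhdsWithin_le_nhds (s := Set.Iio (1:ℝ)))
    simpa [Pi.mul_def] using this
  refine le_of_tendsto htd ?_
  filter_upwards [self_mem_nhdsWithin,
    mem_nhdsWithin_of_mem_nhds (Ioi_mem_nhds one_pos)] with t (ht1 : t < 1) (ht0 : 0 < t)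
  exact key t ht0 ht1

include hHs hHhom in
lemma Hs_le {y : F} {c : ℝ} (h : ∀ ξ : F, H ξ < 1 → ⟪y, ξ⟫ ≤ c) : Hs y ≤ c := by
  rw [hHs]
  refine csSup_le (K_nonempty hHhom) ?_
  rintro z ⟨ξ, hξ, rfl⟩
  exact h ξ hξ

include hHs hHhom hm hml in
lemma Hs_smul {t : ℝ} (ht : 0 < t) (y : F) : Hs (t • y) = t * Hs y := by
  have key : ∀ s : ℝ, 0 < s → ∀ z : F, Hs (s • z) ≤ s * Hs z := by
    intro s hs z
    refine Hs_le hHhom hHs ?_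
    intro ξ hξ
    rw [real_inner_smul_left]
    have h1 : ⟪z, ξ⟫ ≤ Hs z := by
      rw [hHs]
      exact le_csSup (K_bdd hm hml z) (Set.mem_image_of_mem _ hξ)
    exact mul_le_mul_of_nonneg_left h1 hs.le
  refine le_antisymm (key t ht y) ?_
  have h2 := key t⁻¹ (inv_pos.2 ht) (t • y)
  rw [smul_smul, inv_mul_cancel₀ ht.ne', one_smul] at h2
  calc t * Hs y ≤ t * (t⁻¹ * Hs (t • y)) := mul_le_mul_of_nonneg_left h2 ht.le
    _ = Hs (t • y) := by field_simp


include hHhom hHs hHpos hm hml in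
lemma grad_dual [CompleteSpace F] (htri : ∀ a b : F, H (a + b) ≤ H a + H b)
    {x : F} (hx : x ≠ 0) (hdiffH : DifferentiableAt ℝ H x)
    (hdiffHs : ∀ y : F, y ≠ 0 → DifferentiableAt ℝ Hs y) :
    Hs (gradient H x) = 1 ∧ gradient Hs (gradient H x) = (H x)⁻¹ • x := by
  have hHx : 0 < H x := hHpos x hx
  set y0 := gradient H x with hy0
  set ξ0 : F := (H x)⁻¹ • x with hξ0
  have hHξ0 : H ξ0 = 1 := by
    rw [hξ0, hHhom, abs_of_pos (inv_pos.2 hHx), inv_mul_cancel₀ hHx.ne']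
  have hip : ⟪y0, ξ0⟫ = 1 := by
    rw [hξ0, real_inner_smul_right, hy0, euler hHhom hdiffH, inv_mul_cancel₀ hHx.ne']
  have hHs1 : Hs y0 = 1 := by
    refine le_antisymm (Hs_le hHhom hHs fun ξ hξ => ?_) ?_
    · exact (gradient_le hHpos hHhom htri hdiffH ξ).trans hξ.le
    · rw [← hip]
      exact Hs_ge hHhom hHs hm hml hHξ0.le (by rw [hHξ0]; norm_num)
  have hy0ne : y0 ≠ 0 := by
    intro h
    rw [h, inner_zero_left] at hip
    norm_num at hip
  refine ⟨hHs1, ?_⟩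
  -- the function φ has a global minimum at y0
  have hmin : IsLocalMin (fun y : F => Hs y - ⟪y, ξ0⟫) y0 := by
    refine Filter.Eventually.of_forall fun y => ?_
    have h1 : ⟪y, ξ0⟫ ≤ Hs y :=
      Hs_ge hHhom hHs hm hml hHξ0.le (by rw [hHξ0]; norm_num)
    have h2 : Hs y0 - ⟪y0, ξ0⟫ = 0 := by rw [hHs1, hip]; ring
    simp only [h2]
    linarith
  have hφ : HasFDerivAt (fun y : F => Hs y - ⟪y, ξ0⟫)
      (fderiv ℝ Hs y0 - (innerSL ℝ ξ0 : F →L[ℝ] ℝ)) y0 := by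
    have h1 : HasFDerivAt (fun y : F => ⟪y, ξ0⟫) (innerSL ℝ ξ0 : F →L[ℝ] ℝ) y0 := by
      have := (innerSL ℝ ξ0 : F →L[ℝ] ℝ).hasFDerivAt (x := y0)
      refine this.congr_of_eventuallyEq (Filter.Eventually.of_forall fun y => ?_)
      simp [real_inner_comm]
    exact (hdiffHs y0 hy0ne).hasFDerivAt.sub h1
  have hzero : fderiv ℝ Hs y0 - (innerSL ℝ ξ0 : F →L[ℝ] ℝ) = 0 := by
    rw [← hφ.fderiv]
    exact hmin.fderiv_eq_zero
  have hfd : fderiv ℝ Hs y0 = (innerSL ℝ ξ0 : F →L[ℝ] ℝ) := by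
    rwa [sub_eq_zero] at hzero
  have hkey : (innerSL ℝ ξ0 : F →L[ℝ] ℝ) = InnerProductSpace.toDual ℝ F ξ0 := by
    ext v
    simp [InnerProductSpace.toDual_apply_apply]
  rw [gradient, hfd, hkey, LinearIsometryEquiv.symm_apply_apply]

lemma grad_smul_eq [CompleteSpace F]
    (hHssmul : ∀ (t : ℝ), 0 < t → ∀ y : F, Hs (t • y) = t * Hs y)
    {t : ℝ} (ht : 0 < t) {y : F} (hy : y ≠ 0)
    (hdiffHs : ∀ y : F, y ≠ 0 → DifferentiableAt ℝ Hs y) :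
    gradient Hs (t • y) = gradient Hs y := by
  have hty : t • y ≠ 0 := smul_ne_zero ht.ne' hy
  have h1 : HasFDerivAt (fun z : F => Hs (t • z))
      ((fderiv ℝ Hs (t • y)).comp (t • ContinuousLinearMap.id ℝ F)) y := by
    have hlin : HasFDerivAt (fun z : F => t • z) (t • ContinuousLinearMap.id ℝ F) y := by
      have := (t • ContinuousLinearMap.id ℝ F).hasFDerivAt (x := y)
      refine this.congr_of_eventuallyEq (Filter.Eventually.of_forall fun z => ?_)
      simp
    exact (hdiffHs _ hty).hasFDerivAt.comp y hlin
  have h2 : HasFDerivAt (fun z : F => Hs (t • z)) (t • fderiv ℝ Hs y) y := by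
    have heq : (fun z : F => Hs (t • z)) = fun z : F => t * Hs z := by
      funext z; exact hHssmul t ht z
    rw [heq]
    exact (hdiffHs y hy).hasFDerivAt.const_mul t
  have h3 := h1.unique h2
  have h4 : fderiv ℝ Hs (t • y) = fderiv ℝ Hs y := by
    ext v
    have := congrArg (fun (L : F →L[ℝ] ℝ) => L v) h3
    simp only [ContinuousLinearMap.coe_comp', Function.comp_apply,
      ContinuousLinearMap.smul_apply, ContinuousLinearMap.coe_smul',
      ContinuousLinearMap.coe_id', Pi.smul_apply, id_eq, smul_eq_mul] at this
    have h5 : fderiv ℝ Hs (t • y) (t • v) = t * fderiv ℝ Hs (t • y) v := by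
      rw [map_smul]; simp
    rw [h5] at this
    exact mul_left_cancel₀ ht.ne' this
  rw [gradient, gradient, h4]

include hHhom hHs hHpos hm hml in
lemma J_star_J [CompleteSpace F] (htri : ∀ a b : F, H (a + b) ≤ H a + H b)
    {x : F} (hx : x ≠ 0) (hdiffH : DifferentiableAt ℝ H x)
    (hdiffHs : ∀ y : F, y ≠ 0 → DifferentiableAt ℝ Hs y) :
    Hs (H x • gradient H x) • gradient Hs (H x • gradient H x) = x := by
  have hHx : 0 < H x := hHpos x hx
  obtain ⟨hHs1, hgrad⟩ := grad_dual hHpos hHhom hHs hm hml htri hx hdiffH hdiffHs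
  have hy0ne : gradient H x ≠ 0 := by
    intro h
    have := euler hHhom hdiffH
    rw [h, inner_zero_left] at this
    exact hHx.ne this
  have hsmul := Hs_smul hHhom hHs hm hml hHx (gradient H x)
  have hgs := grad_smul_eq (Hs := Hs) (fun t ht y => Hs_smul hHhom hHs hm hml ht y) hHx hy0ne hdiffHs
  rw [hgs, hgrad, hsmul, hHs1, mul_one, smul_smul, mul_inv_cancel₀ hHx.ne', one_smul]

end Hs
end H
end Stmt17Aux

open Stmt17Aux in
/-- Proposition D, Cozzi–Farina–Valdinoci criterion: Let `H : ℝⁿ → ℝ` be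
continuous, `C¹` on `ℝⁿ \ {0}`, positive away from the origin and absolutely 1-homogeneous
(`H(tξ) = |t| H(ξ)`). Assume `K = {ξ : H(ξ) < 1}` is strictly convex (every interior point
of a segment between two distinct points of the closure of `K` lies in the interior of
`K`), and let `H*(x) = sup_{ξ ∈ K} ⟨x, ξ⟩` be its support function, assumed `C¹` on
`ℝⁿ \ {0}`. Then the Ferone–Kawohl condition
`⟨H(x)∇H(x), H*(y)∇H*(y)⟩ = ⟨x, y⟩` for all `x, y ≠ 0` is equivalent to the existence of a
real symmetric positive definite matrix `M` with `H(ξ) = √⟨Mξ, ξ⟩` for all `ξ`. -/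
theorem stmt_17 {n : ℕ} (hn : 2 ≤ n)
    (H : EuclideanSpace ℝ (Fin n) → ℝ) (hHcont : Continuous H)
    (hH1 : ContDiffOn ℝ 1 H ({0}ᶜ : Set (EuclideanSpace ℝ (Fin n))))
    (hHpos : ∀ ξ : EuclideanSpace ℝ (Fin n), ξ ≠ 0 → 0 < H ξ)
    (hHhom : ∀ (t : ℝ) (ξ : EuclideanSpace ℝ (Fin n)), H (t • ξ) = |t| * H ξ)
    (K : Set (EuclideanSpace ℝ (Fin n))) (hK : K = {ξ | H ξ < 1})
    (hKconv : StrictConvex ℝ (closure K))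
    (Hs : EuclideanSpace ℝ (Fin n) → ℝ)
    (hHs : Hs = fun x => sSup ((fun ξ => ⟪x, ξ⟫) '' K))
    (hHs1 : ContDiffOn ℝ 1 Hs ({0}ᶜ : Set (EuclideanSpace ℝ (Fin n)))) :
    (∀ x y : EuclideanSpace ℝ (Fin n), x ≠ 0 → y ≠ 0 →
        ⟪H x • gradient H x, Hs y • gradient Hs y⟫ = ⟪x, y⟫)
      ↔ ∃ M : Matrix (Fin n) (Fin n) ℝ, M.PosDef ∧
          ∀ ξ : EuclideanSpace ℝ (Fin n), H ξ = Real.sqrt ⟪Matrix.toEuclideanLin M ξ, ξ⟫ := by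
  subst hK
  haveI : Nontrivial (EuclideanSpace ℝ (Fin n)) := by
    rw [← Module.finrank_pos_iff (R := ℝ)]
    simp only [finrank_euclideanSpace, Fintype.card_fin]
    omega
  obtain ⟨m, hm, hml⟩ := H_lower hHcont hHpos hHhom
  have hconv : Convex ℝ {ξ : (EuclideanSpace ℝ (Fin n)) | H ξ ≤ 1} := by
    rw [← closure_K hHcont hHpos hHhom]
    exact hKconv.convex
  have htri : ∀ a b : (EuclideanSpace ℝ (Fin n)), H (a + b) ≤ H a + H b := H_triangle hHpos hHhom hconv
  have hdiffH : ∀ x : (EuclideanSpace ℝ (Fin n)), x ≠ 0 → DifferentiableAt ℝ H x := fun x hx =>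
    (hH1.contDiffAt (isOpen_compl_singleton.mem_nhds hx)).differentiableAt one_ne_zero
  have hdiffHs : ∀ y : (EuclideanSpace ℝ (Fin n)), y ≠ 0 → DifferentiableAt ℝ Hs y := fun y hy =>
    (hHs1.contDiffAt (isOpen_compl_singleton.mem_nhds hy)).differentiableAt one_ne_zero
  have heuler : ∀ w : (EuclideanSpace ℝ (Fin n)), w ≠ 0 → ⟪gradient H w, w⟫ = H w := fun w hw =>
    euler hHhom (hdiffH w hw)
  constructor
  · -- forward direction
    intro hFK
    classical
    set f : (EuclideanSpace ℝ (Fin n)) → (EuclideanSpace ℝ (Fin n)) := fun x => if x = 0 then 0 else H x • gradient H x with hfdef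
    have hf0 : f 0 = 0 := by simp [hfdef]
    have hfne : ∀ w : (EuclideanSpace ℝ (Fin n)), w ≠ 0 → f w = H w • gradient H w := fun w hw => by
      simp [hfdef, hw]
    have hfip : ∀ w : (EuclideanSpace ℝ (Fin n)), w ≠ 0 → ⟪f w, w⟫ = H w * H w := by
      intro w hw
      rw [hfne w hw, real_inner_smul_left, heuler w hw]
    have hfw0 : ∀ w : (EuclideanSpace ℝ (Fin n)), w ≠ 0 → f w ≠ 0 := by
      intro w hw h0
      have := hfip w hw
      rw [h0, inner_zero_left] at this
      exact (mul_pos (hHpos w hw) (hHpos w hw)).ne this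
    have hsym : ∀ x w : (EuclideanSpace ℝ (Fin n)), w ≠ 0 → ⟪f x, w⟫ = ⟪x, f w⟫ := by
      intro x w hw
      rcases eq_or_ne x 0 with rfl | hx
      · rw [hf0, inner_zero_left, inner_zero_left]
      · have hJJ := J_star_J hHpos hHhom hHs hm hml htri hw (hdiffH w hw) hdiffHs
        have := hFK x (H w • gradient H w) hx (by rw [← hfne w hw]; exact hfw0 w hw)
        rw [hJJ] at this
        rw [hfne x hx, hfne w hw]
        exact this
    have key : ∀ a : (EuclideanSpace ℝ (Fin n)), (∀ w : (EuclideanSpace ℝ (Fin n)), w ≠ 0 → ⟪a, w⟫ = 0) → a = 0 := by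
      intro a ha
      by_contra h0
      have := ha a h0
      rw [real_inner_self_eq_norm_sq] at this
      exact h0 (by simpa using norm_eq_zero.1 (by nlinarith [norm_nonneg a]))
    set L : (EuclideanSpace ℝ (Fin n)) →ₗ[ℝ] (EuclideanSpace ℝ (Fin n)) :=
      { toFun := f
        map_add' := by
          intro x y
          have h : ∀ w : (EuclideanSpace ℝ (Fin n)), w ≠ 0 → ⟪f (x + y) - (f x + f y), w⟫ = 0 := by
            intro w hw
            rw [inner_sub_left, inner_add_left, hsym _ _ hw, hsym _ _ hw, hsym _ _ hw,
              inner_add_left]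
            ring
          exact sub_eq_zero.1 (key _ h)
        map_smul' := by
          intro c x
          have h : ∀ w : (EuclideanSpace ℝ (Fin n)), w ≠ 0 → ⟪f (c • x) - c • f x, w⟫ = 0 := by
            intro w hw
            rw [inner_sub_left, hsym _ _ hw, real_inner_smul_left, real_inner_smul_left,
              hsym _ _ hw]
            ring
          simpa using sub_eq_zero.1 (key _ h) } with hLdef
    have hLf : ∀ x : (EuclideanSpace ℝ (Fin n)), L x = f x := fun x => rfl
    have hLsym : ∀ a b : (EuclideanSpace ℝ (Fin n)), ⟪L a, b⟫ = ⟪a, L b⟫ := by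
      intro a b
      rcases eq_or_ne b 0 with rfl | hb
      · rw [inner_zero_right, map_zero, inner_zero_right]
      · rw [hLf, hLf]; exact hsym a b hb
    have hLip : ∀ ξ : (EuclideanSpace ℝ (Fin n)), ξ ≠ 0 → ⟪L ξ, ξ⟫ = H ξ * H ξ := fun ξ hξ => by
      rw [hLf]; exact hfip ξ hξ
    refine ⟨(Matrix.toEuclideanLin (𝕜 := ℝ) (m := Fin n) (n := Fin n)).symm L, Matrix.PosDef.of_dotProduct_mulVec_pos ?_ ?_, ?_⟩
    · rw [Matrix.isHermitian_iff_isSymmetric]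
      intro a b
      rw [LinearEquiv.apply_symm_apply]
      exact hLsym a b
    · intro v hv
      set ξ : (EuclideanSpace ℝ (Fin n)) := (WithLp.equiv 2 (Fin n → ℝ)).symm v with hξdef
      have hξ0 : ξ ≠ 0 := by
        intro h
        apply hv
        have : (WithLp.equiv 2 (Fin n → ℝ)) ξ = v := by simp [hξdef]
        rw [← this, h]
        simp
      have hdp : dotProduct (star v)
          (Matrix.mulVec ((Matrix.toEuclideanLin (𝕜 := ℝ) (m := Fin n) (n := Fin n)).symm L) v)
          = ⟪ξ, L ξ⟫ := by
        rw [EuclideanSpace.inner_eq_star_dotProduct, dotProduct_comm]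
        congr 1
        have hLA : L = Matrix.toEuclideanLin
              ((Matrix.toEuclideanLin (𝕜 := ℝ) (m := Fin n) (n := Fin n)).symm L) :=
          (LinearEquiv.apply_symm_apply _ _).symm
        conv_rhs => rw [hLA]
        rfl
      rw [hdp, real_inner_comm, hLip ξ hξ0]
      exact mul_pos (hHpos ξ hξ0) (hHpos ξ hξ0)
    · intro ξ
      rw [LinearEquiv.apply_symm_apply]
      rcases eq_or_ne ξ 0 with rfl | hξ
      · rw [H_zero hHhom, map_zero, inner_zero_left, Real.sqrt_zero]
      · rw [hLip ξ hξ, Real.sqrt_mul_self (hHpos ξ hξ).le]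
  · -- backward direction
    rintro ⟨M, hM, hMH⟩ x y hx hy
    set L := Matrix.toEuclideanLin M with hLdef
    have hLsym : ∀ a b : (EuclideanSpace ℝ (Fin n)), ⟪L a, b⟫ = ⟪a, L b⟫ := Matrix.isHermitian_iff_isSymmetric.1 hM.1
    have hQpos : ∀ ξ : (EuclideanSpace ℝ (Fin n)), ξ ≠ 0 → 0 < ⟪L ξ, ξ⟫ := by
      intro ξ hξ
      have h1 := hHpos ξ hξ
      rw [hMH ξ] at h1
      exact Real.sqrt_pos.1 h1
    have hgrad : ∀ ξ : (EuclideanSpace ℝ (Fin n)), ξ ≠ 0 → H ξ • gradient H ξ = L ξ := by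
      intro ξ hξ
      have hHξ : 0 < H ξ := hHpos ξ hξ
      set C : (EuclideanSpace ℝ (Fin n)) →L[ℝ] (EuclideanSpace ℝ (Fin n)) := LinearMap.toContinuousLinearMap L with hCdef
      have hC : ∀ z : (EuclideanSpace ℝ (Fin n)), C z = L z := fun z => rfl
      set Q : (EuclideanSpace ℝ (Fin n)) → ℝ := fun z => ⟪L z, z⟫ with hQdef
      have hQ : HasFDerivAt Q ((fderivInnerCLM ℝ (L ξ, ξ)).comp
          (C.prod (ContinuousLinearMap.id ℝ (EuclideanSpace ℝ (Fin n))))) ξ := by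
        have h1 : HasFDerivAt (fun z : (EuclideanSpace ℝ (Fin n)) => C z) C ξ := C.hasFDerivAt
        have h2 : HasFDerivAt (fun z : (EuclideanSpace ℝ (Fin n)) => z) (ContinuousLinearMap.id ℝ (EuclideanSpace ℝ (Fin n))) ξ :=
          hasFDerivAt_id ξ
        have := h1.inner ℝ h2
        simpa [hC] using this
      have hQξ : 0 < Q ξ := hQpos ξ hξ
      have hsq : HasDerivAt Real.sqrt (1/(2*Real.sqrt (Q ξ))) (Q ξ) :=
        Real.hasDerivAt_sqrt hQξ.ne'
      have hcomp : HasFDerivAt (fun z : (EuclideanSpace ℝ (Fin n)) => Real.sqrt (Q z))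
          ((1/(2*Real.sqrt (Q ξ))) • ((fderivInnerCLM ℝ (L ξ, ξ)).comp
            (C.prod (ContinuousLinearMap.id ℝ (EuclideanSpace ℝ (Fin n)))))) ξ :=
        hsq.comp_hasFDerivAt ξ hQ
      have hHeq : H = fun z : (EuclideanSpace ℝ (Fin n)) => Real.sqrt (Q z) := funext fun z => hMH z
      have hsqQ : Real.sqrt (Q ξ) = H ξ := (hMH ξ).symm
      have hgradAt : HasGradientAt H ((H ξ)⁻¹ • L ξ) ξ := by
        rw [hasGradientAt_iff_hasFDerivAt, hHeq]
        refine hcomp.congr_fderiv ?_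
        ext v
        rw [InnerProductSpace.toDual_apply_apply]
        simp only [ContinuousLinearMap.coe_smul', Pi.smul_apply,
          ContinuousLinearMap.coe_comp', Function.comp_apply,
          ContinuousLinearMap.prod_apply, ContinuousLinearMap.coe_id', id_eq,
          fderivInnerCLM_apply, smul_eq_mul]
        rw [real_inner_smul_left, hC]
        have h3 : ⟪L v, ξ⟫ = ⟪L ξ, v⟫ := by rw [hLsym, real_inner_comm]
        rw [h3, hsqQ]
        field_simp
        ring
      rw [hgradAt.gradient, smul_smul, mul_inv_cancel₀ hHξ.ne', one_smul]
    have hLinj : Function.Injective L := by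
      intro a b hab
      by_contra hne
      have h0 : a - b ≠ 0 := sub_ne_zero.2 hne
      have := hQpos (a - b) h0
      rw [map_sub, hab, sub_self, inner_zero_left] at this
      exact lt_irrefl 0 this
    have hLsurj : Function.Surjective L :=
      LinearMap.injective_iff_surjective.1 hLinj
    obtain ⟨w, hw⟩ := hLsurj y
    have hw0 : w ≠ 0 := by
      intro h
      apply hy
      rw [← hw, h, map_zero]
    have hJJ := J_star_J hHpos hHhom hHs hm hml htri hw0 (hdiffH w hw0) hdiffHs
    rw [hgrad w hw0, hw] at hJJ
    rw [hgrad x hx, hJJ, hLsym, hw]
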